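/- For every constant C with 0 < C ≤ 1, the function h(π) = h₀ + (1/(ρ+λ₁₀)) log(1 - C π^(1+λ₁₀/ρ)), where h₀ = (r/ρ - 1 + log ρ + λ₁₀ b)/(ρ + λ₁₀), solves the ODE -(ρ + λ₁₀)h + r/ρ - 1 + λ₁₀ b - log(ρ⁻¹ - π h'(π)) = 0 on (0,1); moreover among these solutions only C = 1 yields lim_{π→1⁻} h(π) = -∞. -/

import Mathlib

open Set Real Filter
open scoped Topology

theorem stmt_2 (ρ l10 r b C : ℝ) (hρ : 0 < ρ) (hl : 0 ≤ l10)
    (hC : C ∈ Ioc (0:ℝ) 1)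
    (h0 : ℝ) (hh0 : h0 = (r/ρ - 1 + Real.log ρ + l10 * b) / (ρ + l10))
    (h : ℝ → ℝ)
    (hh : ∀ p : ℝ, h p = h0 + (1/(ρ + l10)) * Real.log (1 - C * p ^ (1 + l10/ρ))) :
    (∀ p ∈ Ioo (0:ℝ) 1,
      -(ρ + l10) * h p + r/ρ - 1 + l10 * b - Real.log (ρ⁻¹ - p * deriv h p) = 0) ∧
    (Tendsto h (nhdsWithin 1 (Iio 1)) atBot ↔ C = 1) := by
  obtain ⟨hC0, hC1⟩ := hC
  have hs : 0 < ρ + l10 := by linarith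
  set α := 1 + l10/ρ with hα
  have hα1 : 1 ≤ α := by
    have := div_nonneg hl hρ.le
    rw [hα]; linarith
  have hαρ : α * ρ = ρ + l10 := by rw [hα]; field_simp
  have hfun : h = fun p => h0 + (1/(ρ + l10)) * Real.log (1 - C * p ^ α) := funext hh
  have hh0' : h0 * (ρ + l10) = r/ρ - 1 + Real.log ρ + l10 * b := by
    rw [hh0]; field_simp
  constructor
  · intro p hp
    obtain ⟨hp0, hp1⟩ := hp
    have hpa : p ^ α < 1 := Real.rpow_lt_one hp0.le hp1 (by linarith)
    have hpa0 : 0 < p ^ α := Real.rpow_pos_of_pos hp0 α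
    have hu : 0 < 1 - C * p ^ α := by nlinarith
    have hd : HasDerivAt h ((1/(ρ+l10)) * ((-(C * (α * p ^ (α-1)))) / (1 - C * p ^ α))) p := by
      rw [hfun]
      have h1 : HasDerivAt (fun x : ℝ => x ^ α) (α * p ^ (α-1)) p :=
        Real.hasDerivAt_rpow_const (Or.inl hp0.ne')
      have h2 : HasDerivAt (fun x : ℝ => 1 - C * x ^ α) (-(C * (α * p ^ (α-1)))) p := by
        simpa using ((h1.const_mul C).const_sub 1)
      exact ((h2.log hu.ne').const_mul (1/(ρ+l10))).const_add h0
    rw [hd.deriv]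
    have hpp : p ^ (α - 1) * p = p ^ α := by
      rw [← Real.rpow_add_one hp0.ne' (α-1)]; ring_nf
    have hval : ρ⁻¹ - p * ((1/(ρ+l10)) * ((-(C * (α * p ^ (α-1)))) / (1 - C * p ^ α)))
        = ρ⁻¹ * (1 - C * p ^ α)⁻¹ := by
      field_simp
      linear_combination (ρ*C*α) * hpp + (C*p^α) * hαρ
    rw [hval, Real.log_mul (inv_ne_zero hρ.ne') (inv_ne_zero hu.ne'), Real.log_inv,
      Real.log_inv]
    have hexp : -(ρ+l10) * h p = -(h0*(ρ+l10)) - Real.log (1 - C * p ^ α) := by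
      rw [hh p]; field_simp; ring
    rw [hexp]
    linarith [hh0']
  · constructor
    · intro htend
      by_contra hne
      have hClt : C < 1 := lt_of_le_of_ne hC1 hne
      have hcont : ContinuousAt (fun p : ℝ => h0 + (1/(ρ+l10)) * Real.log (1 - C * p ^ α)) 1 := by
        have h1 : ContinuousAt (fun p : ℝ => p ^ α) 1 :=
          Real.continuousAt_rpow_const 1 α (Or.inl one_ne_zero)
        have h2 : ContinuousAt (fun p : ℝ => (1:ℝ) - C * p ^ α) 1 :=
          continuousAt_const.sub (continuousAt_const.mul h1)
        have h3 : ContinuousAt (fun p : ℝ => Real.log (1 - C * p ^ α)) 1 := by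
          apply h2.log
          rw [Real.one_rpow]
          nlinarith
        exact continuousAt_const.add (continuousAt_const.mul h3)
      have hlim : Tendsto h (nhdsWithin 1 (Iio 1))
          (nhds (h0 + (1/(ρ+l10)) * Real.log (1 - C * (1:ℝ) ^ α))) := by
        rw [hfun]
        exact hcont.tendsto.mono_left nhdsWithin_le_nhds
      exact not_tendsto_atBot_of_tendsto_nhds hlim htend
    · intro hC1'
      subst hC1'
      have hmem : Ioo (0:ℝ) 1 ∈ 𝓝[<] (1:ℝ) :=
        Ioo_mem_nhdsLT_of_mem ⟨zero_lt_one, le_refl 1⟩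
      have hto0 : Tendsto (fun p : ℝ => 1 - 1 * p ^ α) (𝓝[<] (1:ℝ)) (𝓝[>] 0) := by
        rw [tendsto_nhdsWithin_iff]
        constructor
        · have h1 : ContinuousAt (fun p : ℝ => (1:ℝ) - 1 * p ^ α) 1 :=
            continuousAt_const.sub (continuousAt_const.mul
              (Real.continuousAt_rpow_const 1 α (Or.inl one_ne_zero)))
          have := h1.tendsto.mono_left (nhdsWithin_le_nhds (s := Iio (1:ℝ)))
          simpa using this
        · filter_upwards [hmem] with p hp
          have : p ^ α < 1 := Real.rpow_lt_one hp.1.le hp.2 (by linarith)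
          simpa [Set.mem_Ioi] using this
      have hlog : Tendsto (fun p : ℝ => Real.log (1 - 1 * p ^ α)) (𝓝[<] (1:ℝ)) atBot :=
        Real.tendsto_log_nhdsGT_zero.comp hto0
      have hmul : Tendsto (fun p : ℝ => (1/(ρ+l10)) * Real.log (1 - 1 * p ^ α))
          (𝓝[<] (1:ℝ)) atBot :=
        hlog.const_mul_atBot (by positivity)
      rw [hfun]
      simpa using tendsto_atBot_add_const_left _ h0 hmul
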